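/- Let E be a Dedekind complete (conditionally complete) locally solid vector lattice, let B ⊆ E be a topologically bounded set, and let (T_α), (S_α) be nets of linear operators on E (over the same directed index set) converging order-uniformly on every topologically bounded subset of E to linear operators T and S respectively. Assume that each T_α, each S_α, T and S map every topologically bounded set into an order bounded set. For a linear operator R, S' and 0 ≤ x set F(R,S')(x) := sup { R u + S' v : 0 ≤ u, 0 ≤ v, u + v = x }. Then for every a ∈ E with 0 ≤ a there is an index α₀ such that for all α ≥ α₀ and all x ∈ B with 0 ≤ x one has |F(T_α,S_α)(x) − F(T,S)(x)| ≤ a. -/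

import Mathlib

open Filter Topology Pointwise

/-- A set `B` is topologically bounded: for every neighborhood `V` of `0` there is `γ > 0`
with `B ⊆ γ • V`. -/
def IsTopBounded {E : Type*} [SMul ℝ E] [TopologicalSpace E] [Zero E] (B : Set E) : Prop :=
  ∀ V ∈ nhds (0 : E), ∃ γ : ℝ, 0 < γ ∧ B ⊆ γ • V

/-- The Riesz–Kantorovich expression: `F(R,S)(x) = sup {R u + S v : 0 ≤ u, 0 ≤ v, u + v = x}`. -/
noncomputable def RKsup {E : Type*} [ConditionallyCompleteLattice E] [AddCommGroup E]
    [Module ℝ E] (R S : E →ₗ[ℝ] E) (x : E) : E :=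
  sSup {z : E | ∃ u v : E, 0 ≤ u ∧ 0 ≤ v ∧ u + v = x ∧ z = R u + S v}

/-- In a Dedekind complete locally solid vector lattice `E`, if `B` is a
topologically bounded set and `(T α) → T₀`, `(S α) → S₀` order-uniformly on every topologically
bounded subset of `E`, with all operators mapping every topologically bounded set into an order
bounded set, then the Riesz–Kantorovich suprema `F(T α, S α)` converge to `F(T₀, S₀)`
order-uniformly on `B ∩ E₊`. -/
theorem rksup_orderUnifConv_on_bounded
    {E : Type*} [ConditionallyCompleteLattice E] [AddCommGroup E] [Module ℝ E]
    [CovariantClass E E (· + ·) (· ≤ ·)] [PosSMulMono ℝ E]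
    [TopologicalSpace E] [IsTopologicalAddGroup E] [ContinuousSMul ℝ E]
    (hsolid : ∀ W ∈ 𝓝 (0 : E), ∃ W' ∈ 𝓝 (0 : E), W' ⊆ W ∧
      ∀ x y : E, y ∈ W' → |x| ≤ |y| → x ∈ W')
    {ι : Type*} [Nonempty ι] [SemilatticeSup ι]
    (B : Set E) (hB : IsTopBounded B)
    (T S : ι → E →ₗ[ℝ] E) (T₀ S₀ : E →ₗ[ℝ] E)
    (hTob : ∀ α : ι, ∀ C : Set E, IsTopBounded C →
      ∃ a : E, 0 ≤ a ∧ (T α) '' C ⊆ Set.Icc (-a) a)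
    (hSob : ∀ α : ι, ∀ C : Set E, IsTopBounded C →
      ∃ a : E, 0 ≤ a ∧ (S α) '' C ⊆ Set.Icc (-a) a)
    (hT₀ob : ∀ C : Set E, IsTopBounded C → ∃ a : E, 0 ≤ a ∧ T₀ '' C ⊆ Set.Icc (-a) a)
    (hS₀ob : ∀ C : Set E, IsTopBounded C → ∃ a : E, 0 ≤ a ∧ S₀ '' C ⊆ Set.Icc (-a) a)
    (hT : ∀ C : Set E, IsTopBounded C →
      ∀ a : E, 0 ≤ a → ∃ α₀ : ι, ∀ α ≥ α₀, ∀ x ∈ C, |T α x - T₀ x| ≤ a)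
    (hS : ∀ C : Set E, IsTopBounded C →
      ∀ a : E, 0 ≤ a → ∃ α₀ : ι, ∀ α ≥ α₀, ∀ x ∈ C, |S α x - S₀ x| ≤ a) :
    ∀ a : E, 0 ≤ a → ∃ α₀ : ι, ∀ α ≥ α₀, ∀ x ∈ B, 0 ≤ x →
      |RKsup (T α) (S α) x - RKsup T₀ S₀ x| ≤ a := by
  intro a ha
  -- The "solid hull" style set of all elements squeezed between 0 and an element of B
  set C : Set E := {u : E | ∃ x ∈ B, 0 ≤ u ∧ u ≤ x} with hCdef
  have hCb : IsTopBounded C := by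
    intro V hV
    obtain ⟨W, hW, hWV, hWsolid⟩ := hsolid V hV
    obtain ⟨γ, hγ, hBγ⟩ := hB W hW
    refine ⟨γ, hγ, fun u hu => ?_⟩
    obtain ⟨x, hxB, hu0, hux⟩ := hu
    obtain ⟨w, hw, hwx⟩ := hBγ hxB
    have hwx' : γ⁻¹ • x = w := by rw [← hwx, inv_smul_smul₀ hγ.ne']
    have hw0 : (0 : E) ≤ w := by
      rw [← hwx']; exact smul_nonneg (inv_nonneg.mpr hγ.le) (hu0.trans hux)
    have hle : γ⁻¹ • u ≤ w := by
      rw [← hwx']; exact smul_le_smul_of_nonneg_left hux (inv_nonneg.mpr hγ.le)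
    have hmem : γ⁻¹ • u ∈ W := by
      refine hWsolid _ w hw ?_
      rw [abs_of_nonneg (smul_nonneg (inv_nonneg.mpr hγ.le) hu0), abs_of_nonneg hw0]
      exact hle
    have : u ∈ γ • W := ⟨γ⁻¹ • u, hmem, by simp [smul_inv_smul₀ hγ.ne']⟩
    exact Set.smul_set_mono hWV this
  have ha2 : (0 : E) ≤ (2 : ℝ)⁻¹ • a := smul_nonneg (by norm_num) ha
  have hhalf : (2 : ℝ)⁻¹ • a + (2 : ℝ)⁻¹ • a = a := by
    rw [← add_smul]; norm_num
  obtain ⟨α₁, hα₁⟩ := hT C hCb _ ha2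
  obtain ⟨α₂, hα₂⟩ := hS C hCb _ ha2
  obtain ⟨b₁, hb₁0, hb₁⟩ := hT₀ob C hCb
  obtain ⟨b₂, hb₂0, hb₂⟩ := hS₀ob C hCb
  refine ⟨α₁ ⊔ α₂, fun α hα x hxB hx0 => ?_⟩
  have hα1 := hα₁ α (le_sup_left.trans hα)
  have hα2 := hα₂ α (le_sup_right.trans hα)
  obtain ⟨c₁, hc₁0, hc₁⟩ := hTob α C hCb
  obtain ⟨c₂, hc₂0, hc₂⟩ := hSob α C hCb
  -- membership of decomposition parts in C
  have hmemC : ∀ u v : E, 0 ≤ u → 0 ≤ v → u + v = x → u ∈ C ∧ v ∈ C := by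
    intro u v hu hv huv
    constructor
    · exact ⟨x, hxB, hu, by rw [← huv]; exact le_add_of_nonneg_right hv⟩
    · exact ⟨x, hxB, hv, by rw [← huv]; exact le_add_of_nonneg_left hu⟩
  -- nonemptiness of the decomposition sets
  have hne : ∀ P Q : E →ₗ[ℝ] E,
      {z : E | ∃ u v : E, 0 ≤ u ∧ 0 ≤ v ∧ u + v = x ∧ z = P u + Q v}.Nonempty :=
    fun P Q => ⟨P x + Q 0, x, 0, hx0, le_refl 0, add_zero x, rfl⟩
  -- boundedness above of the decomposition sets
  have hbdd : ∀ P Q : E →ₗ[ℝ] E, (∀ u ∈ C, P u ≤ b₁) → (∀ v ∈ C, Q v ≤ b₂) →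
      BddAbove {z : E | ∃ u v : E, 0 ≤ u ∧ 0 ≤ v ∧ u + v = x ∧ z = P u + Q v} := by
    intro P Q hP hQ
    refine ⟨b₁ + b₂, fun z hz => ?_⟩
    obtain ⟨u, v, hu, hv, huv, rfl⟩ := hz
    obtain ⟨huC, hvC⟩ := hmemC u v hu hv huv
    exact add_le_add (hP u huC) (hQ v hvC)
  have hbdd₀ : BddAbove {z : E | ∃ u v : E, 0 ≤ u ∧ 0 ≤ v ∧ u + v = x ∧ z = T₀ u + S₀ v} :=
    hbdd T₀ S₀ (fun u hu => (hb₁ ⟨u, hu, rfl⟩).2) (fun v hv => (hb₂ ⟨v, hv, rfl⟩).2)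
  have hbddα : BddAbove {z : E | ∃ u v : E, 0 ≤ u ∧ 0 ≤ v ∧ u + v = x ∧ z = T α u + S α v} := by
    refine ⟨c₁ + c₂, fun z hz => ?_⟩
    obtain ⟨u, v, hu, hv, huv, rfl⟩ := hz
    obtain ⟨huC, hvC⟩ := hmemC u v hu hv huv
    exact add_le_add (hc₁ ⟨u, huC, rfl⟩).2 (hc₂ ⟨v, hvC, rfl⟩).2
  -- key one-sided estimate
  have key : ∀ P Q P' Q' : E →ₗ[ℝ] E,
      (∀ u ∈ C, P u - P' u ≤ (2 : ℝ)⁻¹ • a) → (∀ v ∈ C, Q v - Q' v ≤ (2 : ℝ)⁻¹ • a) →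
      BddAbove {z : E | ∃ u v : E, 0 ≤ u ∧ 0 ≤ v ∧ u + v = x ∧ z = P' u + Q' v} →
      RKsup P Q x ≤ RKsup P' Q' x + a := by
    intro P Q P' Q' hP hQ hbdd'
    refine csSup_le (hne P Q) fun z hz => ?_
    obtain ⟨u, v, hu, hv, huv, rfl⟩ := hz
    obtain ⟨huC, hvC⟩ := hmemC u v hu hv huv
    have h1 : P u ≤ P' u + (2 : ℝ)⁻¹ • a := sub_le_iff_le_add'.mp (hP u huC)
    have h2 : Q v ≤ Q' v + (2 : ℝ)⁻¹ • a := sub_le_iff_le_add'.mp (hQ v hvC)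
    calc P u + Q v ≤ (P' u + (2 : ℝ)⁻¹ • a) + (Q' v + (2 : ℝ)⁻¹ • a) := add_le_add h1 h2
      _ = (P' u + Q' v) + ((2 : ℝ)⁻¹ • a + (2 : ℝ)⁻¹ • a) := by abel
      _ = (P' u + Q' v) + a := by rw [hhalf]
      _ ≤ RKsup P' Q' x + a :=
        add_le_add_left (le_csSup hbdd' ⟨u, v, hu, hv, huv, rfl⟩) a
  have hup : RKsup (T α) (S α) x ≤ RKsup T₀ S₀ x + a :=
    key (T α) (S α) T₀ S₀
      (fun u hu => (le_abs_self _).trans (hα1 u hu))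
      (fun v hv => (le_abs_self _).trans (hα2 v hv)) hbdd₀
  have hdown : RKsup T₀ S₀ x ≤ RKsup (T α) (S α) x + a :=
    key T₀ S₀ (T α) (S α)
      (fun u hu => (le_abs_self _).trans (by rw [abs_sub_comm]; exact hα1 u hu))
      (fun v hv => (le_abs_self _).trans (by rw [abs_sub_comm]; exact hα2 v hv)) hbddα
  refine abs_le'.mpr ⟨sub_le_iff_le_add'.mpr hup, ?_⟩
  rw [neg_sub]
  exact sub_le_iff_le_add'.mpr hdown
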